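/- arXiv:1904.03214 — 2 statements merged into one kernel-verified Lean document; each statement's English description precedes it below -/
import Mathlib

section
/- Let m, l ≥ 3 with l odd, and let f: C_m → C_l be a graph homomorphism. Then the parity of deg f equals the parity of m; in particular, if m is odd then deg f ≠ 0. -/
/-- The oriented edge `[u,v]` as an edge chain: the antisymmetrized generator. -/
noncomputable def oe {V : Type*} [DecidableEq V] (u v : V) : V × V →₀ ℤ :=
  Finsupp.single (u, v) 1 - Finsupp.single (v, u) 1

/-- The map on edge chains induced by a map on vertices. -/
noncomputable def fE {V W : Type*} [DecidableEq V] [DecidableEq W] (f : V → W) :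
    (V × V →₀ ℤ) →+ (W × W →₀ ℤ) :=
  Finsupp.mapDomain.addMonoidHom (Prod.map f f)

/-- Adjacency in the `m`-cycle on vertex set `ZMod m`. -/
def CycAdj (m : ℕ) (u v : ZMod m) : Prop := v = u + 1 ∨ v = u - 1

/-- The oriented cycle `O_m = [0,1] + [1,2] + ⋯ + [m-1,0]` as an edge chain. -/
noncomputable def cycO (m : ℕ) : ZMod m × ZMod m →₀ ℤ :=
  ∑ i ∈ Finset.range m, oe (i : ZMod m) ((i : ZMod m) + 1)


noncomputable def Sw (l : ℕ) : (ZMod l × ZMod l →₀ ℤ) →+ ZMod 2 :=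
  Finsupp.liftAddHom fun p =>
    (AddMonoidHom.mulLeft (if p.2 = p.1 + 1 then (1 : ZMod 2) else 0)).comp
      (Int.castAddHom (ZMod 2))

lemma Sw_oe (l : ℕ) (u v : ZMod l) :
    Sw l (oe u v) = (if v = u + 1 then (1:ZMod 2) else 0) - (if u = v + 1 then 1 else 0) := by
  simp [Sw, oe, map_sub]

lemma fE_oe {V W : Type*} [DecidableEq V] [DecidableEq W] (f : V → W) (u v : V) :
    fE f (oe u v) = oe (f u) (f v) := by
  simp [fE, oe, map_sub, Finsupp.mapDomain_single]

lemma Sw_edge (l : ℕ) (hl : 3 ≤ l) (u v : ZMod l) (h : CycAdj l u v) :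
    Sw l (oe u v) = 1 := by
  haveI : NeZero l := ⟨by omega⟩
  have h2 : (2 : ZMod l) ≠ 0 := by
    intro h0
    have : (l : ℕ) ∣ 2 := by
      have := (ZMod.natCast_eq_zero_iff 2 l).mp (by exact_mod_cast h0)
      exact this
    have := Nat.le_of_dvd (by norm_num) this
    omega
  rcases h with h | h
  · subst h
    rw [Sw_oe, if_pos rfl, if_neg]
    · norm_num
    · intro hu
      exact h2 (by linear_combination -hu)
  · subst h
    rw [Sw_oe, if_neg, if_pos (by ring)]
    · decide
    · intro hu
      exact h2 (by linear_combination -hu)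


/-- If `f : C_m → C_l` is a graph homomorphism (`m, l ≥ 3`, `l` odd) with degree `d`,
then `d` has the same parity as `m`; in particular if `m` is odd then `d ≠ 0`. -/
theorem degree_parity (m l : ℕ) (hm : 3 ≤ m) (hl : 3 ≤ l) (hlodd : Odd l)
    (f : ZMod m → ZMod l) (hf : ∀ u v, CycAdj m u v → CycAdj l (f u) (f v))
    (d : ℤ) (hd : fE f (cycO m) = d • cycO l) :
    (Odd d ↔ Odd m) ∧ (Odd m → d ≠ 0) := by
  haveI : NeZero l := ⟨by omega⟩
  have h1 : Sw l (fE f (cycO m)) = (m : ZMod 2) := by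
    rw [cycO, map_sum, map_sum]
    rw [Finset.sum_congr rfl (fun i _ => by
      rw [fE_oe, Sw_edge l hl _ _ (hf _ _ (Or.inl rfl))])]
    simp
  have h2 : Sw l (d • cycO l) = (d : ZMod 2) := by
    rw [map_zsmul, cycO, map_sum]
    rw [Finset.sum_congr rfl (fun i _ => Sw_edge l hl _ _ (Or.inl rfl))]
    have hl1 : ((l : ℕ) : ZMod 2) = 1 := by
      rw [← ZMod.natCast_mod, Nat.odd_iff.mp hlodd, Nat.cast_one]
    simp [hl1]
  rw [hd, h2] at h1
  have hd2 : Odd d ↔ (d : ZMod 2) ≠ 0 := by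
    rw [Ne, ZMod.intCast_zmod_eq_zero_iff_dvd, ← Int.not_even_iff_odd, even_iff_two_dvd]
    norm_num
  have hm2 : Odd m ↔ ((m : ℕ) : ZMod 2) ≠ 0 := by
    rw [← Nat.not_even_iff_odd, even_iff_two_dvd, ← ZMod.natCast_eq_zero_iff]
  constructor
  · rw [hd2, hm2, h1]
  · intro hmo hd0
    have : Odd d := by rw [hd2, hm2] at *; rw [← h1] at hmo; exact hmo
    simp [hd0] at this
end

section
/- Let n ≥ 2, k ≥ 3 odd, and f: C_k^n → C_3 a polymorphism with degrees deg_i f at each coordinate. Define the joint degree deg_{1,2} f by f_E(O_{k,{1,2}}^n) = 2^{n-2} k^{n-1} deg_{1,2} f · O_3, where O_{k,{1,2}}^n = O_{k,1}^n ∩ O_{k,2}^n. Then deg_{1,2} f = deg_1 f + deg_2 f. -/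
/-- Adjacency in the direct power `C_kⁿ`: coordinatewise adjacency in `C_k`. -/
def PowAdj (k n : ℕ) (x y : Fin n → ZMod k) : Prop := ∀ i, CycAdj k (x i) (y i)

open Classical in
/-- The edge chain `O_{k,i}ⁿ` of all oriented edges of `C_kⁿ` whose `i`-th coordinate is
oriented according to `O_k`. -/
noncomputable def Okin (k n : ℕ) [NeZero k] (i : Fin n) :
    ((Fin n → ZMod k) × (Fin n → ZMod k)) →₀ ℤ :=
  ∑ p ∈ Finset.univ.filter
      (fun p : (Fin n → ZMod k) × (Fin n → ZMod k) =>
        PowAdj k n p.1 p.2 ∧ p.2 i = p.1 i + 1),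
    oe p.1 p.2

open Classical in
/-- The edge chain `O_{k,{1,2}}ⁿ` of all oriented edges of `C_kⁿ` whose first two
coordinates are both oriented according to `O_k`. -/
noncomputable def Okin2 (k n : ℕ) [NeZero k] (i₁ i₂ : Fin n) :
    ((Fin n → ZMod k) × (Fin n → ZMod k)) →₀ ℤ :=
  ∑ p ∈ Finset.univ.filter
      (fun p : (Fin n → ZMod k) × (Fin n → ZMod k) =>
        PowAdj k n p.1 p.2 ∧ p.2 i₁ = p.1 i₁ + 1 ∧ p.2 i₂ = p.1 i₂ + 1),
    oe p.1 p.2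


lemma cycO3_apply : cycO 3 (0, 1) = 1 := by
  simp only [cycO, Finset.sum_range_succ, Finset.sum_range_zero, oe]
  simp [Finsupp.single_apply]
  decide

lemma oe_swap {V : Type*} [DecidableEq V] (u v : V) : oe v u = - oe u v := by
  simp [oe]

lemma two_ne_zero_zmod (k : ℕ) [NeZero k] (hk : 3 ≤ k) : (2 : ZMod k) ≠ 0 := by
  have h : ((2 : ℕ) : ZMod k) ≠ 0 := by
    rw [Ne, ZMod.natCast_eq_zero_iff]
    intro h
    exact absurd (Nat.le_of_dvd (by norm_num) h) (by omega)
  simpa using h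

lemma hx_lem (k : ℕ) [NeZero k] (hk : 3 ≤ k) (u v : ZMod k) (hadj : CycAdj k u v) :
    (v = u + 1 ↔ ¬ (u = v + 1)) := by
  have h2 : (2 : ZMod k) ≠ 0 := two_ne_zero_zmod k hk
  constructor
  · intro h h'
    apply h2
    have hv : v = v + 2 := by
      conv_lhs => rw [h, h']
      ring
    exact (left_eq_add.mp hv)
  · intro h
    rcases hadj with h' | h'
    · exact h'
    · exact absurd (by rw [h']; ring) h

lemma powAdj_symm {k n : ℕ} {x y : Fin n → ZMod k} (h : PowAdj k n x y) : PowAdj k n y x := by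
  intro i
  rcases h i with h' | h'
  · right; rw [h']; ring
  · left; rw [h']; ring

lemma one_ne_zero_zmod (k : ℕ) [NeZero k] (hk : 3 ≤ k) : (1 : ZMod k) ≠ 0 := by
  have h : ((1 : ℕ) : ZMod k) ≠ 0 := by
    rw [Ne, ZMod.natCast_eq_zero_iff]
    intro h
    exact absurd (Nat.le_of_dvd (by norm_num) h) (by omega)
  simpa using h

lemma powAdj_irrefl {k n : ℕ} [NeZero k] (hk : 3 ≤ k) (x : Fin n → ZMod k) (i : Fin n) :
    ¬ PowAdj k n x x := by
  intro h
  apply one_ne_zero_zmod k hk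
  rcases h i with h' | h'
  · exact left_eq_add.mp h'
  · have h2 : x i + 1 = x i := by
      conv_lhs => rw [h']
      ring
    exact add_eq_left.mp h2

open Classical Finset in
lemma key (k n : ℕ) [NeZero k] (hk : 3 ≤ k) (i₁ i₂ : Fin n) :
    (2 : ℤ) • Okin2 k n i₁ i₂ = Okin k n i₁ + Okin k n i₂ := by
  classical
  set P := (Fin n → ZMod k) × (Fin n → ZMod k)
  set g : P → ((Fin n → ZMod k) × (Fin n → ZMod k) →₀ ℤ) := fun p =>
    (if PowAdj k n p.1 p.2 ∧ p.2 i₁ = p.1 i₁ + 1 then oe p.1 p.2 else 0) +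
    (if PowAdj k n p.1 p.2 ∧ p.2 i₂ = p.1 i₂ + 1 then oe p.1 p.2 else 0) -
    (if PowAdj k n p.1 p.2 ∧ p.2 i₁ = p.1 i₁ + 1 ∧ p.2 i₂ = p.1 i₂ + 1
      then (2:ℤ) • oe p.1 p.2 else 0)
  have hg : ∑ p : P, g p = 0 := by
    apply Finset.sum_involution (fun p _ => (p.2, p.1))
    · intro a _
      by_cases hadj : PowAdj k n a.1 a.2
      · have hadj' : PowAdj k n a.2 a.1 := powAdj_symm hadj
        have e1 : (a.1 i₁ = a.2 i₁ + 1) ↔ ¬ (a.2 i₁ = a.1 i₁ + 1) := by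
          rw [hx_lem k hk _ _ (hadj i₁)]; tauto
        have e2 : (a.1 i₂ = a.2 i₂ + 1) ↔ ¬ (a.2 i₂ = a.1 i₂ + 1) := by
          rw [hx_lem k hk _ _ (hadj i₂)]; tauto
        show g a + g (a.2, a.1) = 0
        simp only [g]
        by_cases h1 : a.2 i₁ = a.1 i₁ + 1 <;> by_cases h2 : a.2 i₂ = a.1 i₂ + 1
        · rw [if_pos ⟨hadj, h1⟩, if_pos ⟨hadj, h2⟩, if_pos ⟨hadj, h1, h2⟩,
            if_neg (fun hc => (e1.mp hc.2) h1), if_neg (fun hc => (e2.mp hc.2) h2),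
            if_neg (fun hc => (e1.mp hc.2.1) h1)]
          simp only [two_smul]; abel
        · rw [if_pos ⟨hadj, h1⟩, if_neg (fun hc => h2 hc.2), if_neg (fun hc => h2 hc.2.2),
            if_neg (fun hc => (e1.mp hc.2) h1), if_pos ⟨hadj', e2.mpr h2⟩,
            if_neg (fun hc => (e1.mp hc.2.1) h1), oe_swap a.1 a.2]
          abel
        · rw [if_neg (fun hc => h1 hc.2), if_pos ⟨hadj, h2⟩, if_neg (fun hc => h1 hc.2.1),
            if_pos ⟨hadj', e1.mpr h1⟩, if_neg (fun hc => (e2.mp hc.2) h2),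
            if_neg (fun hc => (e2.mp hc.2.2) h2), oe_swap a.1 a.2]
          abel
        · rw [if_neg (fun hc => h1 hc.2), if_neg (fun hc => h2 hc.2),
            if_neg (fun hc => h1 hc.2.1), if_pos ⟨hadj', e1.mpr h1⟩,
            if_pos ⟨hadj', e2.mpr h2⟩, if_pos ⟨hadj', e1.mpr h1, e2.mpr h2⟩,
            oe_swap a.1 a.2]
          simp only [two_smul]; abel
      · have hadj' : ¬ PowAdj k n a.2 a.1 := fun h => hadj (powAdj_symm h)
        show g a + g (a.2, a.1) = 0
        simp only [g]
        rw [if_neg (fun hc => hadj hc.1), if_neg (fun hc => hadj hc.1),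
          if_neg (fun hc => hadj hc.1), if_neg (fun hc => hadj' hc.1),
          if_neg (fun hc => hadj' hc.1), if_neg (fun hc => hadj' hc.1)]
        abel
    · intro a _ hne
      intro hsw
      have h1 : a.1 = a.2 := congrArg Prod.snd hsw
      apply hne
      have hadj : ¬ PowAdj k n a.1 a.2 := by
        rw [h1]; exact powAdj_irrefl hk a.2 i₁
      simp [g, hadj]
    · intro a _; exact mem_univ _
    · intro a _; rfl
  have expand : Okin k n i₁ + Okin k n i₂ - (2:ℤ) • Okin2 k n i₁ i₂ = ∑ p : P, g p := by
    rw [Okin, Okin, Okin2, Finset.smul_sum]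
    rw [Finset.sum_filter, Finset.sum_filter, Finset.sum_filter]
    rw [← Finset.sum_add_distrib, ← Finset.sum_sub_distrib]
  have h0 := expand.trans hg
  rw [sub_eq_zero] at h0
  exact h0.symm

/-- For a polymorphism `f : C_kⁿ → C_3` (`n ≥ 2`, `k ≥ 3` odd), the joint degree at the
first two coordinates, defined by `f_E(O_{k,{1,2}}ⁿ) = 2^{n-2} k^{n-1} deg_{1,2} f • O_3`,
equals the sum of the degrees at the first two coordinates. -/
theorem joint_degree_eq_sum (k n : ℕ) [NeZero k] (hk : 3 ≤ k) (hkodd : Odd k)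
    (hn : 2 ≤ n) (f : (Fin n → ZMod k) → ZMod 3)
    (hf : ∀ x y, PowAdj k n x y → f x ≠ f y)
    (d₁ d₂ d₁₂ : ℤ)
    (hd₁ : fE f (Okin k n ⟨0, by omega⟩) = ((2 * (k : ℤ)) ^ (n - 1) * d₁) • cycO 3)
    (hd₂ : fE f (Okin k n ⟨1, by omega⟩) = ((2 * (k : ℤ)) ^ (n - 1) * d₂) • cycO 3)
    (hd₁₂ : fE f (Okin2 k n ⟨0, by omega⟩ ⟨1, by omega⟩) =
      ((2 : ℤ) ^ (n - 2) * (k : ℤ) ^ (n - 1) * d₁₂) • cycO 3) :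
    d₁₂ = d₁ + d₂ := by
  
  have hkey := key k n hk ⟨0, by omega⟩ ⟨1, by omega⟩
  have happ := congrArg (fE f) hkey
  rw [map_add, AddMonoidHom.map_zsmul, hd₁, hd₂, hd₁₂, smul_smul, ← add_smul] at happ
  have hcoef := congrArg (fun x => x ((0 : ZMod 3), (1 : ZMod 3))) happ
  simp only [Finsupp.smul_apply, cycO3_apply, smul_eq_mul, mul_one] at hcoef
  have hpow : (2:ℤ) * 2 ^ (n-2) = 2 ^ (n-1) := by
    have h : n - 1 = (n-2) + 1 := by omega
    rw [h, pow_succ]; ring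
  have hk3 : (3:ℤ) ≤ (k:ℤ) := by exact_mod_cast hk
  have hk0 : ((2:ℤ) * k) ^ (n-1) ≠ 0 :=
    pow_ne_zero _ (by nlinarith)
  have e : ((2:ℤ) * k) ^ (n-1) * d₁₂ = ((2:ℤ) * k) ^ (n-1) * (d₁ + d₂) := by
    calc ((2:ℤ) * k) ^ (n-1) * d₁₂ = 2 * (2 ^ (n-2) * (k:ℤ) ^ (n-1) * d₁₂) := by
          rw [mul_pow, ← hpow]; ring
      _ = ((2:ℤ) * k) ^ (n-1) * (d₁ + d₂) := by rw [hcoef]; ring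
  exact mul_left_cancel₀ hk0 e
end
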